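/- Every two-dimensional linear subspace of ℂ² ⊗ ℂ² contains a nonzero product vector, i.e., a nonzero vector of the form x ⊗ y with x, y ∈ ℂ². -/

import Mathlib

open TensorProduct

private lemma rank_one_scalar {a b c d : ℂ} (h : a * d = b * c) :
    ∃ x0 x1 y0 y1 : ℂ, a = x0 * y0 ∧ b = x0 * y1 ∧ c = x1 * y0 ∧ d = x1 * y1 := by
  by_cases ha : a = 0
  · have hbc : b * c = 0 := by rw [← h, ha, zero_mul]
    rcases mul_eq_zero.mp hbc with hb | hc
    · exact ⟨0, 1, c, d, by simp [ha, hb]⟩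
    · exact ⟨b, d, 0, 1, by simp [ha, hc]⟩
  · refine ⟨1, c / a, a, b, by ring, by ring, by field_simp, ?_⟩
    field_simp
    rw [mul_comm c b, ← h]; ring

private lemma quad_root (a m d : ℂ) (hd : d ≠ 0) : ∃ t : ℂ, a + t * m + t ^ 2 * d = 0 := by
  obtain ⟨s, hs⟩ := IsAlgClosed.exists_pow_nat_eq (m ^ 2 - 4 * a * d) (n := 2) (by norm_num)
  refine ⟨(s - m) / (2 * d), ?_⟩
  have expand : a + ((s - m)/(2*d)) * m + ((s - m)/(2*d))^2 * d
      = (s^2 - (m^2 - 4*a*d)) / (4*d) := by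
    field_simp
    ring
  rw [expand, hs]
  simp

/-- Every two-dimensional linear subspace of `ℂ² ⊗ ℂ²` contains a nonzero product vector,
i.e. a nonzero vector of the form `x ⊗ y` with `x, y ∈ ℂ²`. -/
theorem two_dim_subspace_contains_product_vector
    (W : Submodule ℂ ((Fin 2 → ℂ) ⊗[ℂ] (Fin 2 → ℂ)))
    (hW : Module.finrank ℂ W = 2) :
    ∃ v ∈ W, v ≠ 0 ∧ ∃ x y : Fin 2 → ℂ, v = x ⊗ₜ[ℂ] y := by
  classical
  set e : Module.Basis (Fin 2) ℂ (Fin 2 → ℂ) := Pi.basisFun ℂ (Fin 2) with he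
  set B : Module.Basis (Fin 2 × Fin 2) ℂ ((Fin 2 → ℂ) ⊗[ℂ] (Fin 2 → ℂ)) :=
    e.tensorProduct e with hB
  set c : ((Fin 2 → ℂ) ⊗[ℂ] (Fin 2 → ℂ)) → Fin 2 → Fin 2 → ℂ :=
    fun v i j => B.repr v (i, j) with hc
  have hctmul : ∀ (x y : Fin 2 → ℂ) i j, c (x ⊗ₜ[ℂ] y) i j = x i * y j := by
    intro x y i j
    simp [hc, hB, he, mul_comm]
  have key : ∀ v : (Fin 2 → ℂ) ⊗[ℂ] (Fin 2 → ℂ),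
      c v 0 0 * c v 1 1 = c v 0 1 * c v 1 0 →
      ∃ x y : Fin 2 → ℂ, v = x ⊗ₜ[ℂ] y := by
    intro v hdet
    obtain ⟨x0, x1, y0, y1, h00, h01, h10, h11⟩ := rank_one_scalar hdet
    refine ⟨![x0, x1], ![y0, y1], ?_⟩
    apply B.repr.injective
    ext ⟨i, j⟩
    have h2 := hctmul ![x0, x1] ![y0, y1] i j
    simp only [hc] at h2 h00 h01 h10 h11
    rw [h2]
    fin_cases i <;> fin_cases j
    · simpa using h00
    · simpa using h01
    · simpa using h10
    · simpa using h11
  haveI : FiniteDimensional ℂ W := FiniteDimensional.finiteDimensional_submodule W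
  haveI : Module.Free ℂ W := Module.Free.of_divisionRing ℂ W
  have bW := Module.finBasisOfFinrankEq ℂ W hW
  set a : (Fin 2 → ℂ) ⊗[ℂ] (Fin 2 → ℂ) := ((bW 0 : W) : (Fin 2 → ℂ) ⊗[ℂ] (Fin 2 → ℂ)) with ha'
  set b : (Fin 2 → ℂ) ⊗[ℂ] (Fin 2 → ℂ) := ((bW 1 : W) : (Fin 2 → ℂ) ⊗[ℂ] (Fin 2 → ℂ)) with hb'
  have haW : a ∈ W := (bW 0).2
  have hbW : b ∈ W := (bW 1).2
  have hli : LinearIndependent ℂ (fun i => ((bW i : W) : (Fin 2 → ℂ) ⊗[ℂ] (Fin 2 → ℂ))) :=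
    bW.linearIndependent.map_injOn W.subtype (W.injective_subtype.injOn)
  have hb0 : b ≠ 0 := by
    intro h
    have h1 := (Fintype.linearIndependent_iff.mp hli) ![0, 1] ?_ 1
    · simp only [Matrix.cons_val_one, Matrix.head_cons] at h1
      exact one_ne_zero h1
    · rw [Fin.sum_univ_two]
      simp only [Matrix.cons_val_zero, Matrix.cons_val_one, Matrix.head_cons,
        zero_smul, one_smul, zero_add]
      rw [← hb']
      exact h
  have hcomb : ∀ t : ℂ, a + t • b ≠ 0 := by
    intro t h
    have h1 := (Fintype.linearIndependent_iff.mp hli) ![1, t] ?_ 0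
    · simp only [Matrix.cons_val_zero] at h1
      exact one_ne_zero h1
    · rw [Fin.sum_univ_two]
      simp only [Matrix.cons_val_zero, Matrix.cons_val_one, Matrix.head_cons, one_smul]
      rw [← ha', ← hb']
      exact h
  set A : Fin 2 → Fin 2 → ℂ := c a with hA
  set M : Fin 2 → Fin 2 → ℂ := c b with hM
  have hlin : ∀ (t : ℂ) i j, c (a + t • b) i j = A i j + t * M i j := by
    intro t i j
    simp [hc, hA, hM, map_add, map_smul]
  by_cases hdb0 : M 0 0 * M 1 1 - M 0 1 * M 1 0 = 0
  · refine ⟨b, hbW, hb0, key b ?_⟩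
    linear_combination hdb0
  · obtain ⟨t, ht⟩ := quad_root (A 0 0 * A 1 1 - A 0 1 * A 1 0)
      (A 0 0 * M 1 1 + M 0 0 * A 1 1 - A 0 1 * M 1 0 - M 0 1 * A 1 0)
      (M 0 0 * M 1 1 - M 0 1 * M 1 0) hdb0
    refine ⟨a + t • b, W.add_mem haW (W.smul_mem t hbW), hcomb t, key _ ?_⟩
    rw [hlin, hlin, hlin, hlin]
    linear_combination ht
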